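/- For a linear distribution H on a vector bundle π: E → M, the intersection H ∩ T^π E is canonically isomorphic to the π-pullback of its restriction to the zero section: H ∩ T^π E ≅ π*((H ∩ T^π E)|_M), via the fibrewise right-translation da_e(V) = da(V, 0_{-e}). -/
import Mathlib


/-!
STATEMENT 10: For a linear distribution H on a vector bundle π : E → M, the vertical
part H ∩ T^π E is canonically isomorphic to the π-pullback of its restriction to the
zero section, via the fibrewise right-translation da_e(V) = da(V, 0_{-e}).

Local model: the bundle is `B × V → B`; the tangent space at any point of the total
space is `B × V`, `dπ = fst`, vertical vectors are those of the form `(0, ν)`, and the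
right translation `da_e` identifies the vertical vector `(0,ν)` at `(x,v)` with the
vertical vector `(0,ν)` at `(x,0)`, i.e. with the element `ν` of the fibre `E_x = V`.
The claim is that under this identification the symbol `H ∩ T^π E` at `(x,v)`
coincides with its value at the zero section `(x,0)`.
-/

variable {B V : Type*} [AddCommGroup B] [Module ℝ B] [AddCommGroup V] [Module ℝ V]

/-- `H` is a linear distribution on the vector bundle `B × V → B`. -/
def IsLinearDistribution (H : B × V → Submodule ℝ (B × V)) : Prop :=
  (∀ (x ξ : B), ((ξ, (0 : V)) : B × V) ∈ H (x, 0)) ∧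
  (∀ (x : B) (v w : V) (ξ : B) (ν ω : V),
      ((ξ, ν) : B × V) ∈ H (x, v) → ((ξ, ω) : B × V) ∈ H (x, w) →
        ((ξ, ν + ω) : B × V) ∈ H (x, v + w)) ∧
  (∀ (x : B) (v : V) (c : ℝ) (ξ : B) (ν : V),
      ((ξ, ν) : B × V) ∈ H (x, v) → ((ξ, c • ν) : B × V) ∈ H (x, c • v))

/-- `H ∩ T^π E ≅ π*((H ∩ T^π E)|_M)` via right translation to the zero section. -/
theorem verticalPart_eq_pullback (H : B × V → Submodule ℝ (B × V))
    (hH : IsLinearDistribution H) :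
    ∀ (x : B) (v ν : V),
      (((0 : B), ν) : B × V) ∈ H (x, v) ↔ (((0 : B), ν) : B × V) ∈ H (x, 0) := by
  obtain ⟨-, hadd, -⟩ := hH
  intro x v ν
  have hz : ∀ w : V, (((0 : B), (0 : V)) : B × V) ∈ H (x, w) := fun w => (H (x, w)).zero_mem
  constructor
  · intro h
    have := hadd x v (-v) 0 ν 0 h (hz (-v))
    simpa using this
  · intro h
    have := hadd x 0 v 0 ν 0 h (hz v)
    simpa using this
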